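/- Let X be a nonempty finite set of lists of Booleans and let y be a list of Booleans. Then the maximum over x ∈ X of the length of the longest common prefix of y and x is attained at an element x* that is either the lexicographic predecessor max{ x ∈ X : x ≤ y } or the lexicographic successor min{ x ∈ X : y ≤ x } of y in X (with respect to the lexicographic order in which false < true and a proper prefix precedes its extensions), whenever the respective element exists. -/

import Mathlib

/-- The length of the longest common prefix of two Boolean lists. -/
def lcpLen : List Bool → List Bool → ℕ
  | a :: as, b :: bs => if a = b then lcpLen as bs + 1 else 0
  | _, _ => 0

/-- The lexicographic (dictionary) order on Boolean lists, with `false < true`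
and a proper prefix preceding its extensions. -/
def lexLe (a b : List Bool) : Prop := List.Lex (· < ·) a b ∨ a = b

lemma lexLe_iff (a b : List Bool) : lexLe a b ↔ a ≤ b :=
  (le_iff_lt_or_eq (a := a) (b := b)).symm

lemma lcpLen_nil (x : List Bool) : lcpLen [] x = 0 := by cases x <;> rfl

/-- `lcpLen y x ≤ lcpLen y y`. -/
lemma lcpLen_le_refl : ∀ (y x : List Bool), lcpLen y x ≤ lcpLen y y := by
  intro y
  induction y with
  | nil => intro x; simp [lcpLen_nil]
  | cons b ys ih =>
    intro x
    cases x with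
    | nil => simp [lcpLen]
    | cons a xs =>
      by_cases hab : b = a
      · subst hab
        simpa [lcpLen] using ih xs
      · simp [lcpLen, hab]

/-- Monotonicity below `y`: if `x ≤ x' ≤ y` then `lcpLen y x ≤ lcpLen y x'`. -/
lemma sandwich_le : ∀ (y x x' : List Bool), x ≤ x' → x' ≤ y →
    lcpLen y x ≤ lcpLen y x' := by
  intro y
  induction y with
  | nil => intro x x' _ _; simp [lcpLen_nil]
  | cons b ys ih =>
    intro x x' h1 h2
    cases x with
    | nil => simp [lcpLen]
    | cons a xs =>
      by_cases hab : b = a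
      · subst hab
        cases x' with
        | nil =>
          exfalso
          rcases lt_or_eq_of_le h1 with h | h
          · exact List.not_lt_nil _ h
          · exact List.cons_ne_nil _ _ h
        | cons c xs' =>
          rcases lt_or_eq_of_le h1 with h | h
          · cases h with
            | rel hlt =>
              exfalso
              rcases lt_or_eq_of_le h2 with h' | h'
              · cases h' with
                | rel hlt' => exact absurd hlt' (lt_asymm hlt)
                | cons h'' => exact lt_irrefl _ hlt
              · cases h'; exact lt_irrefl _ hlt
            | cons htail =>
              have hxy : xs' ≤ ys := by
                rcases lt_or_eq_of_le h2 with h' | h'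
                · cases h' with
                  | rel hlt' => exact absurd hlt' (lt_irrefl _)
                  | cons h'' => exact le_of_lt h''
                · cases h'; exact le_refl _
              have := ih xs xs' (le_of_lt htail) hxy
              simp [lcpLen, this]
          · cases h
            exact le_refl _
      · simp [lcpLen, hab]

/-- Monotonicity above `y`: if `y ≤ x' ≤ x` then `lcpLen y x ≤ lcpLen y x'`. -/
lemma sandwich_ge : ∀ (y x x' : List Bool), y ≤ x' → x' ≤ x →
    lcpLen y x ≤ lcpLen y x' := by
  intro y
  induction y with
  | nil => intro x x' _ _; simp [lcpLen_nil]
  | cons b ys ih =>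
    intro x x' h1 h2
    cases x with
    | nil => simp [lcpLen]
    | cons a xs =>
      by_cases hab : b = a
      · subst hab
        cases x' with
        | nil =>
          exfalso
          rcases lt_or_eq_of_le h1 with h | h
          · exact List.not_lt_nil _ h
          · exact List.cons_ne_nil _ _ h
        | cons c xs' =>
          rcases lt_or_eq_of_le h1 with h | h
          · cases h with
            | rel hlt =>
              exfalso
              rcases lt_or_eq_of_le h2 with h' | h'
              · cases h' with
                | rel hlt' => exact absurd hlt' (lt_asymm hlt)
                | cons h'' => exact lt_irrefl _ hlt
              · cases h'; exact lt_irrefl _ hlt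
            | cons htail =>
              have hxy : xs' ≤ xs := by
                rcases lt_or_eq_of_le h2 with h' | h'
                · cases h' with
                  | rel hlt' => exact absurd hlt' (lt_irrefl _)
                  | cons h'' => exact le_of_lt h''
                · cases h'; exact le_refl _
              have := ih xs xs' (le_of_lt htail) hxy
              simp [lcpLen, this]
          · cases h
            exact lcpLen_le_refl _ _
      · simp [lcpLen, hab]

/-- Let `X` be a nonempty finite set of Boolean lists and `y` a Boolean list.
Then the maximum over `x ∈ X` of the length of the longest common prefix of
`y` and `x` is attained at an element `x*` that is either the lexicographic
predecessor `max{ x ∈ X : x ≤ y }` of `y` in `X`, or the lexicographic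
successor `min{ x ∈ X : y ≤ x }` of `y` in `X` (whenever the respective
element exists). -/
theorem statement16 (X : Finset (List Bool)) (hX : X.Nonempty) (y : List Bool) :
    ∃ xstar ∈ X, (∀ x ∈ X, lcpLen y x ≤ lcpLen y xstar) ∧
      ((lexLe xstar y ∧ ∀ x ∈ X, lexLe x y → lexLe x xstar) ∨
       (lexLe y xstar ∧ ∀ x ∈ X, lexLe y x → lexLe xstar x)) := by
  classical
  simp only [lexLe_iff]
  set P : Finset (List Bool) := X.filter (fun x => x ≤ y) with hP
  set S : Finset (List Bool) := X.filter (fun x => y ≤ x) with hS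
  have hsplit : ∀ x ∈ X, x ∈ P ∨ x ∈ S := by
    intro x hx
    rcases le_total x y with h | h
    · exact Or.inl (Finset.mem_filter.2 ⟨hx, h⟩)
    · exact Or.inr (Finset.mem_filter.2 ⟨hx, h⟩)
  by_cases hPne : P.Nonempty
  · by_cases hSne : S.Nonempty
    · -- both exist; pick the better of the two
      set p := P.max' hPne with hp
      set s := S.min' hSne with hs
      have hpP : p ∈ P := P.max'_mem hPne
      have hsS : s ∈ S := S.min'_mem hSne
      have hpX : p ∈ X := (Finset.mem_filter.1 hpP).1
      have hpy : p ≤ y := (Finset.mem_filter.1 hpP).2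
      have hsX : s ∈ X := (Finset.mem_filter.1 hsS).1
      have hys : y ≤ s := (Finset.mem_filter.1 hsS).2
      have hmaxP : ∀ x ∈ X, x ≤ y → lcpLen y x ≤ lcpLen y p := by
        intro x hx hxy
        exact sandwich_le y x p (P.le_max' x (Finset.mem_filter.2 ⟨hx, hxy⟩)) hpy
      have hmaxS : ∀ x ∈ X, y ≤ x → lcpLen y x ≤ lcpLen y s := by
        intro x hx hyx
        exact sandwich_ge y x s hys (S.min'_le x (Finset.mem_filter.2 ⟨hx, hyx⟩))
      rcases le_total (lcpLen y p) (lcpLen y s) with hc | hc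
      · refine ⟨s, hsX, ?_, Or.inr ⟨hys, fun x hx hyx => S.min'_le x (Finset.mem_filter.2 ⟨hx, hyx⟩)⟩⟩
        intro x hx
        rcases hsplit x hx with h | h
        · exact le_trans (hmaxP x hx (Finset.mem_filter.1 h).2) hc
        · exact hmaxS x hx (Finset.mem_filter.1 h).2
      · refine ⟨p, hpX, ?_, Or.inl ⟨hpy, fun x hx hxy => P.le_max' x (Finset.mem_filter.2 ⟨hx, hxy⟩)⟩⟩
        intro x hx
        rcases hsplit x hx with h | h
        · exact hmaxP x hx (Finset.mem_filter.1 h).2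
        · exact le_trans (hmaxS x hx (Finset.mem_filter.1 h).2) hc
    · -- S empty: everything is in P
      set p := P.max' hPne with hp
      have hpP : p ∈ P := P.max'_mem hPne
      have hpX : p ∈ X := (Finset.mem_filter.1 hpP).1
      have hpy : p ≤ y := (Finset.mem_filter.1 hpP).2
      refine ⟨p, hpX, ?_, Or.inl ⟨hpy, fun x hx hxy => P.le_max' x (Finset.mem_filter.2 ⟨hx, hxy⟩)⟩⟩
      intro x hx
      rcases hsplit x hx with h | h
      · exact sandwich_le y x p (P.le_max' x h) hpy
      · exact absurd ⟨x, h⟩ hSne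
  · -- P empty: everything is in S
    have hSne : S.Nonempty := by
      obtain ⟨x, hx⟩ := hX
      rcases hsplit x hx with h | h
      · exact absurd ⟨x, h⟩ hPne
      · exact ⟨x, h⟩
    set s := S.min' hSne with hs
    have hsS : s ∈ S := S.min'_mem hSne
    have hsX : s ∈ X := (Finset.mem_filter.1 hsS).1
    have hys : y ≤ s := (Finset.mem_filter.1 hsS).2
    refine ⟨s, hsX, ?_, Or.inr ⟨hys, fun x hx hyx => S.min'_le x (Finset.mem_filter.2 ⟨hx, hyx⟩)⟩⟩
    intro x hx
    rcases hsplit x hx with h | h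
    · exact absurd ⟨x, h⟩ hPne
    · exact sandwich_ge y x s hys (S.min'_le x h)
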